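/- arXiv:1503.08266 — 3 statements merged into one kernel-verified Lean document; each statement's English description precedes it below -/
import Mathlib

section
/- Let R be a commutative unital ring and r ≥ 1, n ≥ 1 natural numbers. The n-th dihedral power of the free module R^r is free of rank equal to the bracelet number: T^n_D(R^r) ≅ R^{d_{r,n}}, where d_{r,n} = c_{r,n}/2 + (r+1)·r^{n/2}/4 if n is even and d_{r,n} = c_{r,n}/2 + r^{(n+1)/2}/2 if n is odd, with c_{r,n} = (1/n) ∑_{d | n} φ(d) · r^{n/d} the necklace number and φ Euler's totient function. -/
open TensorProduct PiTensorProduct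

/-- The submodule of dihedral relations in the `n`-th tensor power:
`m_1⊗m_2⊗⋯⊗m_n − m_2⊗⋯⊗m_n⊗m_1` (cyclic rotation) together with
`m_1⊗m_2⊗⋯⊗m_n − m_n⊗⋯⊗m_2⊗m_1` (reversal). -/
abbrev DihRel (R : Type*) [CommRing R] (M : Type*) [AddCommGroup M] [Module R M] (n : ℕ) :
    Submodule R (TensorPower R n M) :=
  Submodule.span R
    ({x | ∃ m : Fin n → M, x = tprod R m - tprod R (fun i => m (finRotate n i))} ∪
     {x | ∃ m : Fin n → M, x = tprod R m - tprod R (fun i => m i.rev)})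

/-- The `n`-th dihedral power `T^n_D M`. -/
abbrev DihPow (R : Type*) [CommRing R] (M : Type*) [AddCommGroup M] [Module R M] (n : ℕ) :=
  TensorPower R n M ⧸ DihRel R M n

namespace DihAux

variable {n r : ℕ}

/-- Generating relation on index words. -/
def T (n r : ℕ) (f g : Fin n → Fin r) : Prop :=
  g = (fun i => f (finRotate n i)) ∨ g = (fun i => f i.rev)

/-- The dihedral setoid on words. -/
def S (n r : ℕ) : Setoid (Fin n → Fin r) := Relation.EqvGen.setoid (T n r)

variable (R : Type) [CommRing R]

/-- Standard basis pure tensors. -/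
noncomputable def e (n r : ℕ) (f : Fin n → Fin r) : TensorPower R n (Fin r → R) :=
  tprod R fun j => Pi.single (f j) (1 : R)

noncomputable def Φ (n r : ℕ) :
    MultilinearMap R (fun _ : Fin n => (Fin r → R)) (Quotient (S n r) →₀ R) :=
  ∑ f : Fin n → Fin r,
    (Finsupp.lsingle (Quotient.mk (S n r) f)).compMultilinearMap
      ((MultilinearMap.mkPiAlgebra R (Fin n) R).compLinearMap fun j => LinearMap.proj (f j))

noncomputable def φ (n r : ℕ) :
    TensorPower R n (Fin r → R) →ₗ[R] (Quotient (S n r) →₀ R) :=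
  PiTensorProduct.lift (Φ R n r)

lemma φ_tprod (m : Fin n → (Fin r → R)) :
    φ R n r (tprod R m) = ∑ f : Fin n → Fin r,
      Finsupp.single (Quotient.mk (S n r) f) (∏ j, m j (f j)) := by
  simp [φ, Φ, MultilinearMap.sum_apply]

lemma φ_perm (σ : Equiv.Perm (Fin n))
    (hσ : ∀ g : Fin n → Fin r, (S n r) g (fun i => g (σ i)))
    (m : Fin n → (Fin r → R)) :
    φ R n r (tprod R fun i => m (σ i)) = φ R n r (tprod R m) := by
  rw [φ_tprod, φ_tprod]
  refine Fintype.sum_equiv (Equiv.arrowCongr σ (Equiv.refl (Fin r))) _ _ (fun g => ?_)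
  have e2 : ⇑(Equiv.arrowCongr σ (Equiv.refl (Fin r))) g = fun j => g (σ.symm j) := by
    funext j; simp [Equiv.arrowCongr]
  have e1 : (fun i => (fun j => g (σ.symm j)) (σ i)) = g := by funext i; simp
  have h1 : Quotient.mk (S n r) (⇑(Equiv.arrowCongr σ (Equiv.refl (Fin r))) g)
      = Quotient.mk (S n r) g := by
    rw [e2]
    have h3 := @Quotient.sound _ (S n r) _ _ (hσ (fun j => g (σ.symm j)))
    rwa [e1] at h3
  rw [h1]
  congr 1
  have := Equiv.prod_comp σ (fun j => m j ((Equiv.arrowCongr σ (Equiv.refl (Fin r))) g j))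
  rw [← this]
  refine Finset.prod_congr rfl (fun j _ => ?_)
  simp [Equiv.arrowCongr]

lemma φ_ker : DihRel R (Fin r → R) n ≤ LinearMap.ker (φ R n r) := by
  rw [Submodule.span_le]
  rintro x (⟨m, rfl⟩ | ⟨m, rfl⟩) <;>
    simp only [SetLike.mem_coe, LinearMap.mem_ker, map_sub, sub_eq_zero]
  · exact (φ_perm R (finRotate n) (fun g => Relation.EqvGen.rel _ _ (Or.inl rfl)) m).symm
  · exact (φ_perm R Fin.revPerm (fun g => Relation.EqvGen.rel _ _ (Or.inr rfl)) m).symm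

lemma e_sub_mem {f g : Fin n → Fin r} (h : (S n r) f g) :
    e R n r f - e R n r g ∈ DihRel R (Fin r → R) n := by
  induction h with
  | rel x y hxy =>
    refine Submodule.subset_span ?_
    rcases hxy with h' | h'
    · exact Or.inl ⟨fun j => Pi.single (x j) 1, by subst h'; rfl⟩
    · exact Or.inr ⟨fun j => Pi.single (x j) 1, by subst h'; rfl⟩
  | refl x => simp
  | symm x y _ ih => simpa [neg_sub] using (DihRel R (Fin r → R) n).neg_mem ih
  | trans x y z _ _ ih1 ih2 => simpa using (DihRel R (Fin r → R) n).add_mem ih1 ih2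

lemma phi_e (f : Fin n → Fin r) :
    φ R n r (e R n r f) = Finsupp.single (Quotient.mk (S n r) f) 1 := by
  classical
  rw [e, φ_tprod]
  have h1 : ∀ g : Fin n → Fin r,
      (∏ j, (Pi.single (f j) (1:R) : Fin r → R) (g j)) = if g = f then (1:R) else 0 := by
    intro g
    have : ∀ j, (Pi.single (f j) (1:R) : Fin r → R) (g j) = if g j = f j then (1:R) else 0 := by
      intro j; simp [Pi.single_apply]
    rw [Finset.prod_congr rfl (fun j _ => this j), Finset.prod_boole]
    simp [funext_iff]
  rw [Finset.sum_congr rfl (fun g _ => by rw [h1 g])]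
  rw [Finset.sum_congr rfl (fun g _ => ?_), Finset.sum_ite_eq' Finset.univ f
    (fun g => Finsupp.single (Quotient.mk (S n r) g) (1:R))]
  · simp
  · split <;> simp [*]

lemma tprod_expand (m : Fin n → (Fin r → R)) :
    (tprod R (s := fun _ : Fin n => Fin r → R)) m
      = ∑ f : Fin n → Fin r, (∏ j, m j (f j)) • e R n r f := by
  classical
  have h0 : m = fun j => ∑ k : Fin r, Pi.single k (m j k) := by
    funext j; rw [Finset.univ_sum_single (m j)]
  conv_lhs => rw [h0]
  rw [MultilinearMap.map_sum]
  refine Finset.sum_congr rfl (fun f _ => ?_)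
  have h1 : ∀ j, (Pi.single (f j) (m j (f j)) : Fin r → R)
      = (m j (f j)) • (Pi.single (f j) (1:R) : Fin r → R) := by
    intro j
    rw [← Pi.single_smul, smul_eq_mul, mul_one]
  rw [show (fun j => (Pi.single (f j) (m j (f j)) : Fin r → R))
      = fun j => (m j (f j)) • (Pi.single (f j) (1:R) : Fin r → R)
    from funext h1]
  rw [MultilinearMap.map_smul_univ]
  rfl

noncomputable def ψ (n r : ℕ) : (Quotient (S n r) →₀ R) →ₗ[R] DihPow R (Fin r → R) n :=
  Finsupp.linearCombination R fun q => (DihRel R (Fin r → R) n).mkQ (e R n r q.out)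

noncomputable def equivFinsupp (n r : ℕ) :
    DihPow R (Fin r → R) n ≃ₗ[R] (Quotient (S n r) →₀ R) := by
  refine LinearEquiv.ofLinear ((DihRel R (Fin r → R) n).liftQ (φ R n r) (φ_ker R)) (ψ R n r) ?_ ?_
  · refine Finsupp.lhom_ext (fun q c => ?_)
    rcases Quotient.exists_rep q with ⟨f, rfl⟩
    simp only [LinearMap.comp_apply, ψ, Finsupp.linearCombination_single, LinearMap.id_apply,
      map_smul]
    rw [Submodule.mkQ_apply, Submodule.liftQ_apply, phi_e]
    rw [show Quotient.mk (S n r) (Quotient.mk (S n r) f).out = Quotient.mk (S n r) f from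
      Quotient.out_eq _]
    rw [Finsupp.smul_single, smul_eq_mul, mul_one]
  · refine Submodule.linearMap_qext _ ?_
    refine PiTensorProduct.ext ?_
    refine MultilinearMap.ext (fun m => ?_)
    simp only [LinearMap.compMultilinearMap_apply, LinearMap.comp_apply, Submodule.mkQ_apply,
      LinearMap.id_apply]
    rw [Submodule.liftQ_apply, φ_tprod]
    rw [map_sum]
    have h2 : ∀ f : Fin n → Fin r,
        ψ R n r (Finsupp.single (Quotient.mk (S n r) f) (∏ j, m j (f j)))
          = (∏ j, m j (f j)) • (DihRel R (Fin r → R) n).mkQ (e R n r f) := by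
      intro f
      rw [ψ, Finsupp.linearCombination_single]
      congr 1
      rw [Submodule.mkQ_apply, Submodule.mkQ_apply, Submodule.Quotient.eq]
      exact e_sub_mem R (Quotient.exact (Quotient.out_eq _))
    rw [Finset.sum_congr rfl (fun f _ => h2 f)]
    have h3 : ∀ f : Fin n → Fin r,
        (∏ j, m j (f j)) • (DihRel R (Fin r → R) n).mkQ (e R n r f)
          = (DihRel R (Fin r → R) n).mkQ ((∏ j, m j (f j)) • e R n r f) :=
      fun f => (map_smul _ _ _).symm
    rw [Finset.sum_congr rfl (fun f _ => h3 f), ← map_sum, ← tprod_expand R m,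
      Submodule.mkQ_apply]



/-! ### Invariant functions and quotients -/

def invariantFunEquiv {α β : Type*} (t : Setoid α) :
    {f : α → β // ∀ a b, t a b → f a = f b} ≃ (Quotient t → β) where
  toFun f := Quotient.lift f.1 f.2
  invFun g := ⟨fun a => g (Quotient.mk t a), fun a b h => congrArg g (Quotient.sound h)⟩
  left_inv f := Subtype.ext rfl
  right_inv g := funext fun q => Quotient.inductionOn q fun _ => rfl

lemma card_invariant {α β : Type*} [Finite α] [Finite β] (t : Setoid α) :
    Nat.card {f : α → β // ∀ a b, t a b → f a = f b}
      = Nat.card β ^ Nat.card (Quotient t) := by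
  rw [Nat.card_congr (invariantFunEquiv t), Nat.card_fun]

/-! ### Rotation fixed points -/

lemma shift_invariant_iff {n r : ℕ} [NeZero n] (k : ZMod n) (f : ZMod n → Fin r) :
    (∀ x, f (x + k) = f x) ↔
      ∀ a b, (QuotientAddGroup.leftRel (AddSubgroup.zmultiples k)) a b → f a = f b := by
  constructor
  · intro hf
    have hnat : ∀ (j : ℕ) (x : ZMod n), f (x + j • k) = f x := by
      intro j
      induction j with
      | zero => intro x; rw [zero_nsmul, add_zero]
      | succ j ih =>
        intro x
        rw [succ_nsmul, ← add_assoc, hf, ih]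
    have hint : ∀ (z : ℤ) (x : ZMod n), f (x + z • k) = f x := by
      intro z x
      cases z with
      | ofNat j =>
        rw [Int.ofNat_eq_coe, natCast_zsmul]; exact hnat j x
      | negSucc j =>
        have h1 : x = (x + Int.negSucc j • k) + (j+1) • k := by
          have hz : (Int.negSucc j + ((j+1 : ℕ) : ℤ)) = 0 := by
            push_cast [Int.negSucc_eq]; ring
          rw [add_assoc, ← natCast_zsmul k (j+1), ← add_zsmul, hz, zero_zsmul, add_zero]
        conv_rhs => rw [h1, hnat (j+1)]
    intro a b hab
    rw [QuotientAddGroup.leftRel_apply] at hab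
    obtain ⟨z, hz⟩ := AddSubgroup.mem_zmultiples_iff.mp hab
    have hb : b = a + z • k := by rw [hz]; abel
    rw [hb, hint]
  · intro h x
    refine h (x + k) x ?_
    rw [QuotientAddGroup.leftRel_apply]
    refine AddSubgroup.mem_zmultiples_iff.mpr ⟨-1, ?_⟩
    simp

lemma card_quot_zmultiples {n : ℕ} [NeZero n] (k : ZMod n) :
    Nat.card (Quotient (QuotientAddGroup.leftRel (AddSubgroup.zmultiples k)))
      = Nat.gcd n k.val := by
  have heq : Quotient (QuotientAddGroup.leftRel (AddSubgroup.zmultiples k))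
      = (ZMod n ⧸ AddSubgroup.zmultiples k) := rfl
  rw [heq]
  have h1 := (AddSubgroup.card_eq_card_quotient_mul_card_addSubgroup
    (AddSubgroup.zmultiples k)).symm
  rw [Nat.card_zmultiples] at h1
  have h2 : addOrderOf k = n / Nat.gcd n (ZMod.val k) := by
    conv_lhs => rw [← ZMod.natCast_rightInverse k]
    exact ZMod.addOrderOf_coe _ (NeZero.ne n)
  rw [h2, Nat.card_zmod] at h1
  have hn : 0 < n := Nat.pos_of_ne_zero (NeZero.ne n)
  have hg : Nat.gcd n (ZMod.val k) ∣ n := Nat.gcd_dvd_left _ _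
  have hgpos : 0 < Nat.gcd n (ZMod.val k) := Nat.gcd_pos_of_pos_left _ hn
  have hq : 0 < n / Nat.gcd n (ZMod.val k) :=
    Nat.div_pos (Nat.le_of_dvd hn hg) hgpos
  have h4 : Nat.gcd n (ZMod.val k) * (n / Nat.gcd n (ZMod.val k)) = n :=
    Nat.mul_div_cancel' hg
  exact Nat.eq_of_mul_eq_mul_right hq (h1.trans h4.symm)

lemma card_fix_shift {n r : ℕ} [NeZero n] (k : ZMod n) :
    Nat.card {f : ZMod n → Fin r // ∀ x, f (x + k) = f x} = r ^ Nat.gcd n k.val := by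
  have e1 : {f : ZMod n → Fin r // ∀ x, f (x + k) = f x}
      ≃ {f : ZMod n → Fin r // ∀ a b,
          (QuotientAddGroup.leftRel (AddSubgroup.zmultiples k)) a b → f a = f b} :=
    Equiv.subtypeEquivRight fun f => shift_invariant_iff k f
  rw [Nat.card_congr e1, card_invariant, Nat.card_eq_fintype_card (α := Fin r),
    Fintype.card_fin, card_quot_zmultiples]

/-! ### Reflection fixed points -/

def reflS (n : ℕ) (k : ZMod n) : Setoid (ZMod n) where
  r a b := b = a ∨ b = k - a
  iseqv := by
    refine ⟨fun a => Or.inl rfl, ?_, ?_⟩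
    · rintro a b (rfl | rfl)
      · exact Or.inl rfl
      · right; ring
    · rintro a b c (rfl | rfl) (h | h) <;> simp [h] <;> right <;> ring

lemma refl_invariant_iff {n r : ℕ} (k : ZMod n) (f : ZMod n → Fin r) :
    (∀ x, f (k - x) = f x) ↔ ∀ a b, (reflS n k) a b → f a = f b := by
  constructor
  · rintro hf a b (rfl | rfl)
    · rfl
    · exact (hf a).symm
  · intro h x
    exact (h x (k - x) (Or.inr rfl)).symm

lemma card_fix_refl {n r : ℕ} [NeZero n] (k : ZMod n) :
    Nat.card {f : ZMod n → Fin r // ∀ x, f (k - x) = f x}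
      = r ^ Nat.card (Quotient (reflS n k)) := by
  have e1 : {f : ZMod n → Fin r // ∀ x, f (k - x) = f x}
      ≃ {f : ZMod n → Fin r // ∀ a b, (reflS n k) a b → f a = f b} :=
    Equiv.subtypeEquivRight fun f => refl_invariant_iff k f
  rw [Nat.card_congr e1, card_invariant, Nat.card_eq_fintype_card (α := Fin r),
    Fintype.card_fin]

/-- Number of classes of the reflection setoid: `2q = n + F`. -/
lemma two_mul_card_quot_reflS {n : ℕ} [NeZero n] (k : ZMod n) :
    2 * Nat.card (Quotient (reflS n k))
      = n + (Finset.univ.filter (fun x : ZMod n => x + x = k)).card := by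
  classical
  letI : Fintype (Quotient (reflS n k)) := Fintype.ofFinite _
  have hmem : ∀ (q : Quotient (reflS n k)) (x : ZMod n),
      Quotient.mk (reflS n k) x = q ↔ (x = q.out ∨ x = k - q.out) := by
    intro q x
    conv_lhs => rw [← Quotient.out_eq q]
    constructor
    · intro h
      rcases Quotient.exact h with h1 | h1
      · exact Or.inl h1.symm
      · right
        rw [eq_sub_iff_add_eq] at h1 ⊢
        linear_combination h1
    · rintro (rfl | rfl)
      · rfl
      · exact Quotient.sound (Or.inr (show q.out = k - (k - q.out) by ring))
  have hcard1 : (n : ℕ) = ∑ q : Quotient (reflS n k),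
      (Finset.univ.filter (fun x : ZMod n => Quotient.mk (reflS n k) x = q)).card := by
    have h0 := Finset.card_eq_sum_card_fiberwise
      (f := fun x : ZMod n => Quotient.mk (reflS n k) x)
      (s := Finset.univ) (t := Finset.univ) (fun x _ => Finset.mem_univ _)
    rw [Finset.card_univ, ZMod.card] at h0
    exact h0
  have hcard2 : (Finset.univ.filter (fun x : ZMod n => x + x = k)).card
      = ∑ q : Quotient (reflS n k),
        (Finset.univ.filter (fun x : ZMod n =>
          Quotient.mk (reflS n k) x = q ∧ x + x = k)).card := by
    have := Finset.card_eq_sum_card_fiberwise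
      (f := fun x : ZMod n => Quotient.mk (reflS n k) x)
      (s := Finset.univ.filter (fun x : ZMod n => x + x = k))
      (t := Finset.univ) (fun x _ => Finset.mem_univ _)
    rw [this]
    refine Finset.sum_congr rfl (fun q _ => ?_)
    congr 1
    rw [Finset.filter_filter]
    refine Finset.filter_congr (fun x _ => ?_)
    tauto
  have key : ∀ q : Quotient (reflS n k),
      (Finset.univ.filter (fun x : ZMod n => Quotient.mk (reflS n k) x = q)).card
        + (Finset.univ.filter (fun x : ZMod n =>
            Quotient.mk (reflS n k) x = q ∧ x + x = k)).card = 2 := by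
    intro q
    by_cases hq : k - q.out = q.out
    · have h1 : (Finset.univ.filter (fun x : ZMod n => Quotient.mk (reflS n k) x = q))
          = {q.out} := by
        ext x
        simp only [Finset.mem_filter, Finset.mem_univ, true_and, Finset.mem_singleton, hmem q x,
          hq]
        tauto
      have h2 : (Finset.univ.filter (fun x : ZMod n =>
          Quotient.mk (reflS n k) x = q ∧ x + x = k)) = {q.out} := by
        ext x
        simp only [Finset.mem_filter, Finset.mem_univ, true_and, Finset.mem_singleton, hmem q x,
          hq]
        constructor
        · tauto
        · rintro rfl
          refine ⟨Or.inl rfl, ?_⟩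
          rw [sub_eq_iff_eq_add] at hq
          exact hq.symm
      rw [h1, h2]; simp
    · have h1 : (Finset.univ.filter (fun x : ZMod n => Quotient.mk (reflS n k) x = q))
          = {q.out, k - q.out} := by
        ext x
        simp only [Finset.mem_filter, Finset.mem_univ, true_and, Finset.mem_insert,
          Finset.mem_singleton, hmem q x]
      have h2 : (Finset.univ.filter (fun x : ZMod n =>
          Quotient.mk (reflS n k) x = q ∧ x + x = k)) = ∅ := by
        ext x
        simp only [Finset.mem_filter, Finset.mem_univ, true_and, Finset.notMem_empty, iff_false,
          not_and, hmem q x]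
        rintro (rfl | rfl) hx
        · exact hq (by rw [sub_eq_iff_eq_add]; exact hx.symm)
        · exact hq (by linear_combination hx)
      rw [h1, h2, Finset.card_insert_of_notMem (by simp [Ne.symm hq]), Finset.card_singleton,
        Finset.card_empty]
  calc 2 * Nat.card (Quotient (reflS n k))
      = 2 * Fintype.card (Quotient (reflS n k)) := by rw [Nat.card_eq_fintype_card]
    _ = ∑ q : Quotient (reflS n k),
          ((Finset.univ.filter (fun x : ZMod n => Quotient.mk (reflS n k) x = q)).card
            + (Finset.univ.filter (fun x : ZMod n =>
                Quotient.mk (reflS n k) x = q ∧ x + x = k)).card) := by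
        rw [Finset.sum_congr rfl (fun q _ => key q), Finset.sum_const, Finset.card_univ,
          smul_eq_mul, mul_comm]
    _ = (∑ q : Quotient (reflS n k),
          (Finset.univ.filter (fun x : ZMod n => Quotient.mk (reflS n k) x = q)).card)
        + ∑ q : Quotient (reflS n k),
            (Finset.univ.filter (fun x : ZMod n =>
              Quotient.mk (reflS n k) x = q ∧ x + x = k)).card := Finset.sum_add_distrib
    _ = n + (Finset.univ.filter (fun x : ZMod n => x + x = k)).card := by
        rw [← hcard1, ← hcard2]

/-! ### Counting solutions of `x + x = k` -/

lemma F_odd {n : ℕ} [NeZero n] (hn : Odd n) (k : ZMod n) :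
    (Finset.univ.filter (fun x : ZMod n => x + x = k)).card = 1 := by
  have h2 : IsUnit (2 : ZMod n) := by
    have := (ZMod.isUnit_iff_coprime 2 n).mpr (Nat.coprime_two_left.mpr hn)
    simpa using this
  obtain ⟨u, hu⟩ := h2
  have hset : (Finset.univ.filter (fun x : ZMod n => x + x = k))
      = {((↑u⁻¹ : ZMod n) * k)} := by
    ext x
    simp only [Finset.mem_filter, Finset.mem_univ, true_and, Finset.mem_singleton]
    constructor
    · intro h
      have h2x : (↑u : ZMod n) * x = k := by rw [hu]; linear_combination h
      rw [← h2x]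
      exact (Units.inv_mul_cancel_left u x).symm
    · rintro rfl
      have h3 : ((↑u⁻¹ : ZMod n) * k) + ((↑u⁻¹ : ZMod n) * k)
          = (↑u : ZMod n) * ((↑u⁻¹ : ZMod n) * k) := by
        rw [hu]; ring
      rw [h3, Units.mul_inv_cancel_left]
  rw [hset, Finset.card_singleton]

lemma half_ne_zero {n : ℕ} [NeZero n] (hn : Even n) :
    ((n/2 : ℕ) : ZMod n) ≠ 0 := by
  rw [Ne, ZMod.natCast_eq_zero_iff]
  obtain ⟨c, hc⟩ := hn
  have hnpos : 0 < n := Nat.pos_of_ne_zero (NeZero.ne n)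
  intro hdvd
  have h1 : 0 < n / 2 := by omega
  have := Nat.le_of_dvd h1 hdvd
  omega

lemma half_add_half {n : ℕ} [NeZero n] (hn : Even n) :
    ((n/2 : ℕ) : ZMod n) + ((n/2 : ℕ) : ZMod n) = 0 := by
  obtain ⟨c, hc⟩ := hn
  rw [← Nat.cast_add, show n/2 + n/2 = n by omega, ZMod.natCast_self]

lemma ker_two {n : ℕ} [NeZero n] (hn : Even n) (z : ZMod n) :
    z + z = 0 ↔ (z = 0 ∨ z = ((n/2 : ℕ) : ZMod n)) := by
  have hnpos : 0 < n := Nat.pos_of_ne_zero (NeZero.ne n)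
  have hz : ((z.val : ℕ) : ZMod n) = z := ZMod.natCast_rightInverse z
  constructor
  · intro h
    have hv : ((z.val + z.val : ℕ) : ZMod n) = 0 := by
      rw [Nat.cast_add, hz, h]
    have hdvd : n ∣ z.val + z.val := (ZMod.natCast_eq_zero_iff _ n).mp hv
    have hlt : z.val < n := ZMod.val_lt z
    obtain ⟨t, ht⟩ := hdvd
    have ht2 : t < 2 := by nlinarith
    obtain ⟨c, hc⟩ := hn
    rcases (by omega : t = 0 ∨ t = 1) with rfl | rfl
    · left
      have : z.val = 0 := by omega
      rw [← hz, this, Nat.cast_zero]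
    · right
      have : z.val = n / 2 := by omega
      rw [← hz, this]
  · rintro (rfl | rfl)
    · rw [add_zero]
    · exact half_add_half hn

lemma F_even {n : ℕ} [NeZero n] (hn : Even n) (k : ZMod n) :
    (Finset.univ.filter (fun x : ZMod n => x + x = k)).card
      = if k ∈ Finset.univ.image (fun x : ZMod n => x + x) then 2 else 0 := by
  split_ifs with h
  · obtain ⟨x₀, _, hx₀⟩ := Finset.mem_image.mp h
    have hset : (Finset.univ.filter (fun x : ZMod n => x + x = k))
        = {x₀, x₀ + ((n/2 : ℕ) : ZMod n)} := by
      ext x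
      simp only [Finset.mem_filter, Finset.mem_univ, true_and, Finset.mem_insert,
        Finset.mem_singleton]
      constructor
      · intro hx
        have hzz : (x - x₀) + (x - x₀) = 0 := by linear_combination hx - hx₀
        rcases (ker_two hn _).mp hzz with h0 | h0
        · left; linear_combination h0
        · right; linear_combination h0
      · rintro (rfl | rfl)
        · exact hx₀
        · linear_combination hx₀ + half_add_half hn
    rw [hset, Finset.card_insert_of_notMem, Finset.card_singleton]
    rw [Finset.mem_singleton]
    intro heq
    exact half_ne_zero hn (by linear_combination -heq)
  · rw [Finset.card_eq_zero, Finset.filter_eq_empty_iff]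
    intro x _ hx
    exact h (Finset.mem_image.mpr ⟨x, Finset.mem_univ _, hx⟩)

/-! ### The gcd-totient identity -/

lemma NT (n r : ℕ) (hn : 0 < n) :
    ∑ k ∈ Finset.range n, r ^ Nat.gcd n k
      = ∑ e ∈ n.divisors, Nat.totient e * r ^ (n / e) := by
  classical
  have h1 : ∀ k ∈ Finset.range n, Nat.gcd n k ∈ n.divisors :=
    fun k _ => Nat.mem_divisors.mpr ⟨Nat.gcd_dvd_left _ _, hn.ne'⟩
  rw [← Finset.sum_fiberwise_of_maps_to h1 (fun k => r ^ Nat.gcd n k)]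
  have h2 : ∀ d ∈ n.divisors,
      (∑ k ∈ (Finset.range n).filter (fun k => Nat.gcd n k = d), r ^ Nat.gcd n k)
        = Nat.totient (n / d) * r ^ d := by
    intro d hd
    rw [Finset.sum_congr rfl (fun k hk => by rw [(Finset.mem_filter.mp hk).2]),
      Finset.sum_const, smul_eq_mul]
    congr 1
    exact (Nat.totient_div_of_dvd (Nat.mem_divisors.mp hd).1).symm
  rw [Finset.sum_congr rfl h2,
    ← Nat.sum_div_divisors n (fun e => Nat.totient e * r ^ (n / e))]
  refine Finset.sum_congr rfl (fun d hd => ?_)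
  rw [Nat.div_div_self (Nat.mem_divisors.mp hd).1 hn.ne']


/-! ### Actions of the dihedral and cyclic groups on words -/

instance dihAct (n r : ℕ) : MulAction (DihedralGroup n) (ZMod n → Fin r) where
  smul g f := match g with
    | .r k => fun x => f (x + k)
    | .sr k => fun x => f (k - x)
  one_smul f := by
    funext x
    show f (x + 0) = f x
    rw [add_zero]
  mul_smul g h f := by
    cases g <;> cases h <;> funext x <;> exact congrArg f (by ring)

lemma r_smul {n r : ℕ} (k : ZMod n) (f : ZMod n → Fin r) :
    DihedralGroup.r k • f = fun x => f (x + k) := rfl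

lemma sr_smul {n r : ℕ} (k : ZMod n) (f : ZMod n → Fin r) :
    DihedralGroup.sr k • f = fun x => f (k - x) := rfl

instance cycAct (n r : ℕ) : AddAction (ZMod n) (ZMod n → Fin r) where
  vadd k f := fun x => f (x + k)
  zero_vadd f := by
    funext x
    show f (x + 0) = f x
    rw [add_zero]
  add_vadd j k f := by funext x; exact congrArg f (by ring)

lemma vadd_def {n r : ℕ} (k : ZMod n) (f : ZMod n → Fin r) :
    k +ᵥ f = fun x => f (x + k) := rfl

/-! ### Bridges between `Fin`-language and `ZMod`-language -/

lemma rot_bridge (m r : ℕ) (f : ZMod (m+1) → Fin r) :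
    (fun i => f (finRotate (m+1) i)) = (fun x : ZMod (m+1) => f (x + 1)) := by
  funext i
  rw [finRotate_succ_apply]
  rfl

lemma rev_bridge (m r : ℕ) (f : ZMod (m+1) → Fin r) :
    (fun i => f (Fin.rev i)) = (fun x : ZMod (m+1) => f (-1 - x)) := by
  funext i
  apply congrArg f
  have e1 : ((@ZMod.val (m+1) (Fin.rev i) : ℕ) : ZMod (m+1)) = Fin.rev i :=
    ZMod.natCast_rightInverse _
  have e2 : ((@ZMod.val (m+1) i : ℕ) : ZMod (m+1)) = i :=
    ZMod.natCast_rightInverse _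
  have hval : @ZMod.val (m+1) (Fin.rev i) = m - @ZMod.val (m+1) i := by
    have h3 := Fin.val_rev i
    have h4 : @ZMod.val (m+1) (Fin.rev i) = (Fin.rev i).val := rfl
    have h5 : @ZMod.val (m+1) i = i.val := rfl
    omega
  have hlt : @ZMod.val (m+1) i < m + 1 := ZMod.val_lt _
  have key : ((m - @ZMod.val (m+1) i : ℕ) : ZMod (m+1))
      = -1 - ((@ZMod.val (m+1) i : ℕ) : ZMod (m+1)) := by
    have hnat : (m - @ZMod.val (m+1) i) + (@ZMod.val (m+1) i + 1) = m + 1 := by omega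
    have h6 : ((m - @ZMod.val (m+1) i : ℕ) : ZMod (m+1))
        + ((@ZMod.val (m+1) i + 1 : ℕ) : ZMod (m+1)) = 0 := by
      rw [← Nat.cast_add, hnat]
      exact ZMod.natCast_self (m+1)
    have h7 : ((@ZMod.val (m+1) i + 1 : ℕ) : ZMod (m+1))
        = ((@ZMod.val (m+1) i : ℕ) : ZMod (m+1)) + 1 := by push_cast; ring
    rw [h7] at h6
    linear_combination h6
  conv_lhs => rw [← e1, hval]
  rw [key, e2]


/-! ### The orbit relation of the dihedral action is the dihedral setoid -/

lemma orbitRel_eq (m r : ℕ) :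
    MulAction.orbitRel (DihedralGroup (m+1)) (ZMod (m+1) → Fin r) = S (m+1) r := by
  have claimA : ∀ (f : ZMod (m+1) → Fin r) (j : ℕ),
      Relation.EqvGen (T (m+1) r) f (fun x : ZMod (m+1) => f (x + (j : ZMod (m+1)))) := by
    intro f j
    induction j with
    | zero =>
      have h0 : (fun x : ZMod (m+1) => f (x + ((0:ℕ) : ZMod (m+1)))) = f := by
        funext x; rw [Nat.cast_zero, add_zero]
      rw [h0]
      exact Relation.EqvGen.refl f
    | succ j ih =>
      refine Relation.EqvGen.trans _ _ _ ih (Relation.EqvGen.rel _ _ ?_)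
      left
      rw [rot_bridge m r (fun x : ZMod (m+1) => f (x + (j : ZMod (m+1))))]
      funext x
      exact congrArg f (by push_cast; ring)
  have claimB : ∀ (f : ZMod (m+1) → Fin r) (k : ZMod (m+1)),
      Relation.EqvGen (T (m+1) r) f (fun x : ZMod (m+1) => f (x + k)) := by
    intro f k
    have h := claimA f (@ZMod.val (m+1) k)
    rwa [show ((@ZMod.val (m+1) k : ℕ) : ZMod (m+1)) = k from ZMod.natCast_rightInverse k] at h
  have claimC : ∀ (f : ZMod (m+1) → Fin r) (k : ZMod (m+1)),
      Relation.EqvGen (T (m+1) r) f (fun x : ZMod (m+1) => f (k - x)) := by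
    intro f k
    refine Relation.EqvGen.trans _ _ _
      (Relation.EqvGen.rel _ _ (Or.inr rfl : T (m+1) r f (fun i => f (Fin.rev i)))) ?_
    rw [rev_bridge]
    have h1 := claimB (fun x : ZMod (m+1) => f (-1 - x)) (-1 - k)
    have h2 : (fun x => (fun y : ZMod (m+1) => f (-1 - y)) (x + (-1 - k)))
        = (fun x : ZMod (m+1) => f (k - x)) := by
      funext x; exact congrArg f (by ring)
    rwa [h2] at h1
  apply Setoid.ext
  intro f g
  rw [MulAction.orbitRel_apply, MulAction.mem_orbit_iff]
  show (∃ h : DihedralGroup (m+1), h • g = f) ↔ Relation.EqvGen (T (m+1) r) f g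
  constructor
  · rintro ⟨h, rfl⟩
    refine Relation.EqvGen.symm _ _ ?_
    cases h with
    | r k => rw [r_smul]; exact claimB g k
    | sr k => rw [sr_smul]; exact claimC g k
  · intro h
    induction h with
    | rel a b hab =>
      rcases hab with h' | h'
      · refine ⟨(DihedralGroup.r (1 : ZMod (m+1)))⁻¹, ?_⟩
        have hb : b = DihedralGroup.r (1 : ZMod (m+1)) • a := by rw [h', rot_bridge, r_smul]
        rw [hb, inv_smul_smul]
      · refine ⟨(DihedralGroup.sr (-1 : ZMod (m+1)))⁻¹, ?_⟩
        have hb : b = DihedralGroup.sr (-1 : ZMod (m+1)) • a := by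
          rw [h', rev_bridge, sr_smul]
        rw [hb, inv_smul_smul]
    | refl a => exact ⟨1, one_smul _ _⟩
    | symm a b _ ih =>
      obtain ⟨h, rfl⟩ := ih
      exact ⟨h⁻¹, inv_smul_smul h b⟩
    | trans a b c _ _ ih1 ih2 =>
      obtain ⟨h1, rfl⟩ := ih1
      obtain ⟨h2, hh2⟩ := ih2
      exact ⟨h1 * h2, by rw [mul_smul, hh2]⟩




/-! ### Fixed point cardinalities for the actions -/

def dihSum (n : ℕ) : (ZMod n ⊕ ZMod n) ≃ DihedralGroup n where
  toFun := Sum.elim DihedralGroup.r DihedralGroup.sr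
  invFun g := match g with
    | .r k => Sum.inl k
    | .sr k => Sum.inr k
  left_inv := by rintro (k | k) <;> rfl
  right_inv := by rintro (k | k) <;> rfl

lemma card_fixedBy_r {n r : ℕ} [NeZero n] (k : ZMod n) :
    Nat.card (MulAction.fixedBy (ZMod n → Fin r) (DihedralGroup.r k))
      = r ^ Nat.gcd n k.val := by
  have e : MulAction.fixedBy (ZMod n → Fin r) (DihedralGroup.r k)
      ≃ {f : ZMod n → Fin r // ∀ x, f (x + k) = f x} := by
    refine Equiv.subtypeEquivRight (fun f => ?_)
    rw [MulAction.mem_fixedBy, r_smul]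
    exact ⟨fun h x => congrFun h x, fun h => funext h⟩
  rw [Nat.card_congr e, card_fix_shift]

lemma card_fixedBy_sr {n r : ℕ} [NeZero n] (k : ZMod n) :
    Nat.card (MulAction.fixedBy (ZMod n → Fin r) (DihedralGroup.sr k))
      = r ^ Nat.card (Quotient (reflS n k)) := by
  have e : MulAction.fixedBy (ZMod n → Fin r) (DihedralGroup.sr k)
      ≃ {f : ZMod n → Fin r // ∀ x, f (k - x) = f x} := by
    refine Equiv.subtypeEquivRight (fun f => ?_)
    rw [MulAction.mem_fixedBy, sr_smul]
    exact ⟨fun h x => congrFun h x, fun h => funext h⟩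
  rw [Nat.card_congr e, card_fix_refl]

lemma card_fixedBy_vadd {n r : ℕ} [NeZero n] (k : ZMod n) :
    Nat.card (AddAction.fixedBy (ZMod n → Fin r) k) = r ^ Nat.gcd n k.val := by
  have e : AddAction.fixedBy (ZMod n → Fin r) k
      ≃ {f : ZMod n → Fin r // ∀ x, f (x + k) = f x} := by
    refine Equiv.subtypeEquivRight (fun f => ?_)
    rw [AddAction.mem_fixedBy, vadd_def]
    exact ⟨fun h x => congrFun h x, fun h => funext h⟩
  rw [Nat.card_congr e, card_fix_shift]

/-! ### The Burnside counting theorem -/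

theorem counting (m r : ℕ) :
    ∃ c : ℕ, (m+1) * c = ∑ e ∈ (m+1).divisors, Nat.totient e * r ^ ((m+1) / e) ∧
      (Even (m+1) → 4 * Nat.card (Quotient (S (m+1) r))
        = 2 * c + (r + 1) * r ^ ((m+1) / 2)) ∧
      (Odd (m+1) → 2 * Nat.card (Quotient (S (m+1) r)) = c + r ^ ((m+1+1) / 2)) := by
  classical
  have hnpos : 0 < m + 1 := Nat.succ_pos m
  letI instΩc : Fintype (Quotient (AddAction.orbitRel (ZMod (m+1)) (ZMod (m+1) → Fin r))) :=
    Fintype.ofFinite _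
  letI instΩd : Fintype (Quotient (MulAction.orbitRel (DihedralGroup (m+1))
    (ZMod (m+1) → Fin r))) := Fintype.ofFinite _
  set c := Fintype.card (Quotient (AddAction.orbitRel (ZMod (m+1)) (ZMod (m+1) → Fin r))) with hc
  set d := Fintype.card (Quotient (MulAction.orbitRel (DihedralGroup (m+1))
    (ZMod (m+1) → Fin r))) with hd
  -- cyclic Burnside
  have hburnC := AddAction.sum_card_fixedBy_eq_card_orbits_mul_card_addGroup
    (ZMod (m+1)) (ZMod (m+1) → Fin r)
  rw [ZMod.card] at hburnC
  have hfixC : ∀ k : ZMod (m+1),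
      Fintype.card (AddAction.fixedBy (ZMod (m+1) → Fin r) k)
        = r ^ Nat.gcd (m+1) k.val := by
    intro k
    rw [← Nat.card_eq_fintype_card, card_fixedBy_vadd]
  rw [Finset.sum_congr rfl (fun k _ => hfixC k)] at hburnC
  -- reindex the gcd sum over `range (m+1)`
  have hsum1 : ∑ k : ZMod (m+1), r ^ Nat.gcd (m+1) k.val
      = ∑ j ∈ Finset.range (m+1), r ^ Nat.gcd (m+1) j := by
    refine Finset.sum_nbij' (fun k => ZMod.val k) (fun j => (j : ZMod (m+1)))
      (fun k _ => Finset.mem_range.mpr (ZMod.val_lt k)) (fun j _ => Finset.mem_univ _)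
      (fun k _ => ZMod.natCast_rightInverse k)
      (fun j hj => ZMod.val_cast_of_lt (Finset.mem_range.mp hj)) (fun k _ => rfl)
  have hC : (m+1) * c = ∑ e ∈ (m+1).divisors, Nat.totient e * r ^ ((m+1) / e) := by
    rw [mul_comm, ← hburnC, hsum1, NT _ _ hnpos]
  -- dihedral Burnside
  letI fixins : ∀ g : DihedralGroup (m+1),
      Fintype (MulAction.fixedBy (ZMod (m+1) → Fin r) g) := fun g => Fintype.ofFinite _
  have hburnD := MulAction.sum_card_fixedBy_eq_card_orbits_mul_card_group
    (DihedralGroup (m+1)) (ZMod (m+1) → Fin r)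
  rw [DihedralGroup.card] at hburnD
  have hsplit : ∑ g : DihedralGroup (m+1),
      Fintype.card (MulAction.fixedBy (ZMod (m+1) → Fin r) g)
      = (∑ k : ZMod (m+1), Fintype.card (MulAction.fixedBy (ZMod (m+1) → Fin r)
          (DihedralGroup.r k)))
        + ∑ k : ZMod (m+1), Fintype.card (MulAction.fixedBy (ZMod (m+1) → Fin r)
            (DihedralGroup.sr k)) := by
    rw [← Equiv.sum_comp (dihSum (m+1))
      (fun g => Fintype.card (MulAction.fixedBy (ZMod (m+1) → Fin r) g)),
      Fintype.sum_sum_type]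
    rfl
  have hfixR : ∀ k : ZMod (m+1),
      Fintype.card (MulAction.fixedBy (ZMod (m+1) → Fin r) (DihedralGroup.r k))
        = r ^ Nat.gcd (m+1) k.val := by
    intro k; rw [← Nat.card_eq_fintype_card, card_fixedBy_r]
  have hfixSR : ∀ k : ZMod (m+1),
      Fintype.card (MulAction.fixedBy (ZMod (m+1) → Fin r) (DihedralGroup.sr k))
        = r ^ Nat.card (Quotient (reflS (m+1) k)) := by
    intro k; rw [← Nat.card_eq_fintype_card, card_fixedBy_sr]
  rw [hsplit, Finset.sum_congr rfl (fun k _ => hfixR k),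
    Finset.sum_congr rfl (fun k _ => hfixSR k), hburnC] at hburnD
  -- hburnD : c * (m+1) + ∑ k, r ^ q_k = d * (2 * (m+1))
  have hQd : Nat.card (Quotient (S (m+1) r)) = d := by
    rw [hd, ← Nat.card_eq_fintype_card, ← orbitRel_eq m r]
    rfl
  refine ⟨c, hC, ?_, ?_⟩
  · -- even case
    intro hev
    obtain ⟨t, ht⟩ := hev
    have ht2 : (m+1)/2 = t := by omega
    have hqk : ∀ k : ZMod (m+1), Nat.card (Quotient (reflS (m+1) k))
        = if k ∈ Finset.univ.image (fun x : ZMod (m+1) => x + x) then t + 1 else t := by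
      intro k
      have h1 := two_mul_card_quot_reflS k
      rw [F_even ⟨t, ht⟩ k] at h1
      split_ifs at h1 ⊢ with h <;> omega
    have hrefl : ∑ k : ZMod (m+1), r ^ Nat.card (Quotient (reflS (m+1) k))
        = t * r ^ (t+1) + t * r ^ t := by
      rw [Finset.sum_congr rfl (fun k _ => by rw [hqk k])]
      rw [Finset.sum_congr rfl (fun k _ => apply_ite (fun q => r ^ q) _ _ _)]
      rw [Finset.sum_ite, Finset.sum_const, Finset.sum_const, smul_eq_mul, smul_eq_mul]
      have himg : (Finset.univ.filter
          (fun k : ZMod (m+1) => k ∈ Finset.univ.image (fun x : ZMod (m+1) => x + x)))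
          = Finset.univ.image (fun x : ZMod (m+1) => x + x) := by
        ext x; simp
      have hcard_img : 2 * (Finset.univ.image (fun x : ZMod (m+1) => x + x)).card = m+1 := by
        have h0 := Finset.card_eq_sum_card_image (fun x : ZMod (m+1) => x + x) Finset.univ
        rw [Finset.card_univ, ZMod.card] at h0
        have h2 : ∀ b ∈ Finset.univ.image (fun x : ZMod (m+1) => x + x),
            (Finset.univ.filter (fun a : ZMod (m+1) => a + a = b)).card = 2 := by
          intro b hb
          rw [F_even ⟨t, ht⟩ b, if_pos hb]
        rw [Finset.sum_congr rfl h2, Finset.sum_const, smul_eq_mul] at h0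
        omega
      have hcard_not : (Finset.univ.filter
          (fun k : ZMod (m+1) => ¬ k ∈ Finset.univ.image (fun x : ZMod (m+1) => x + x))).card
          = t := by
        have h0 := Finset.card_filter_add_card_filter_not
          (s := (Finset.univ : Finset (ZMod (m+1))))
          (p := fun k : ZMod (m+1) => k ∈ Finset.univ.image (fun x : ZMod (m+1) => x + x))
        rw [Finset.card_univ, ZMod.card, himg] at h0
        omega
      rw [himg, hcard_not]
      have : (Finset.univ.image (fun x : ZMod (m+1) => x + x)).card = t := by omega
      rw [this]
    rw [hrefl] at hburnD
    rw [hQd]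
    -- hburnD : c * (m+1) + (t * r^(t+1) + t * r^t) = d * (2*(m+1))
    refine Nat.eq_of_mul_eq_mul_left hnpos ?_
    have hpow : r ^ ((m+1)/2) = r ^ t := by rw [ht2]
    rw [hpow]
    calc (m+1) * (4 * d) = 2 * (d * (2 * (m+1))) := by ring
      _ = 2 * (c * (m+1) + (t * r ^ (t+1) + t * r ^ t)) := by rw [hburnD]
      _ = (m+1) * (2 * c + (r + 1) * r ^ t) := by
          rw [pow_succ, show m + 1 = t + t from ht]
          ring
  · -- odd case
    intro hodd
    have hqk : ∀ k : ZMod (m+1), Nat.card (Quotient (reflS (m+1) k)) = (m+1+1)/2 := by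
      intro k
      have h1 := two_mul_card_quot_reflS k
      rw [F_odd hodd k] at h1
      omega
    have hrefl : ∑ k : ZMod (m+1), r ^ Nat.card (Quotient (reflS (m+1) k))
        = (m+1) * r ^ ((m+1+1)/2) := by
      rw [Finset.sum_congr rfl (fun k _ => by rw [hqk k]), Finset.sum_const,
        Finset.card_univ, ZMod.card, smul_eq_mul]
    rw [hrefl] at hburnD
    rw [hQd]
    refine Nat.eq_of_mul_eq_mul_left hnpos ?_
    calc (m+1) * (2 * d) = d * (2 * (m+1)) := by ring
      _ = c * (m+1) + (m+1) * r ^ ((m+1+1)/2) := hburnD.symm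
      _ = (m+1) * (c + r ^ ((m+1+1)/2)) := by ring

end DihAux

/-- Let `R` be a commutative unital ring and `r, n ≥ 1`.  The `n`-th
dihedral power of the free module `R^r` is free of rank the bracelet number `d_{r,n}`,
where `d_{r,n} = c_{r,n}/2 + (r+1)·r^{n/2}/4` if `n` is even and
`d_{r,n} = c_{r,n}/2 + r^{(n+1)/2}/2` if `n` is odd, with
`c_{r,n} = (1/n) ∑_{d ∣ n} φ(d) r^{n/d}` the necklace number:
`T^n_D(R^r) ≅ R^{d_{r,n}}`. -/
theorem dihedralPower_free_module (R : Type) [CommRing R] (r n : ℕ) (hr : 1 ≤ r)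
    (hn : 1 ≤ n) :
    ∃ c d : ℕ, n * c = ∑ e ∈ n.divisors, Nat.totient e * r ^ (n / e) ∧
      (Even n → 4 * d = 2 * c + (r + 1) * r ^ (n / 2)) ∧
      (Odd n → 2 * d = c + r ^ ((n + 1) / 2)) ∧
      Nonempty (DihPow R (Fin r → R) n ≃ₗ[R] (Fin d → R)) := by
  obtain ⟨m, rfl⟩ : ∃ m, n = m + 1 := ⟨n - 1, by omega⟩
  obtain ⟨c, hc, heven, hodd⟩ := DihAux.counting m r
  refine ⟨c, Nat.card (Quotient (DihAux.S (m+1) r)), hc, heven, hodd, ?_⟩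
  haveI : Finite (Quotient (DihAux.S (m+1) r)) := Quotient.finite _
  exact ⟨(DihAux.equivFinsupp R (m+1) r).trans
    ((Finsupp.linearEquivFunOnFinite R R _).trans
      (LinearEquiv.funCongrLeft R R (Finite.equivFin _).symm))⟩
end

section
/- Let R be a commutative unital ring, r ≥ 1 and n ≥ 1 natural numbers, and G ≤ S_n a subgroup of the symmetric group on n letters. Let G act on the set of functions [r]^{[n]} = {f : {1,...,n} → {1,...,r}} by (π.f)(i) = f(π.i), and let g_{r,n} denote the number of orbits of this action. Then the n-th G-power of the free module R^r is free of rank g_{r,n}: T^n_G(R^r) ≅ R^{g_{r,n}}. More generally, for any ideal I ⊴ R, T^n_G((R/I)^r) ≅ (R/I)^{g_{r,n}}. -/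
open TensorProduct PiTensorProduct

/-- The submodule of relations in the `n`-th tensor power induced by a subgroup
`G ≤ S_n`. -/
abbrev GRel (R : Type*) [CommRing R] (M : Type*) [AddCommGroup M] [Module R M] (n : ℕ)
    (G : Subgroup (Equiv.Perm (Fin n))) : Submodule R (TensorPower R n M) :=
  Submodule.span R {x | ∃ (m : Fin n → M) (π : Equiv.Perm (Fin n)), π ∈ G ∧
    x = tprod R (fun i => m (π i)) - tprod R m}

/-- The `n`-th `G`-power
`T^n_G M = T^n M / ⟨m_{π1}⊗⋯⊗m_{πn} − m_1⊗⋯⊗m_n : π ∈ G⟩`. -/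
abbrev GPow (R : Type*) [CommRing R] (M : Type*) [AddCommGroup M] [Module R M] (n : ℕ)
    (G : Subgroup (Equiv.Perm (Fin n))) :=
  TensorPower R n M ⧸ GRel R M n G

/-! ### Auxiliary definitions and lemmas -/

/-- The orbit space of `G` acting on `Fin n → Fin r`. -/
abbrev QuotG (n r : ℕ) (G : Subgroup (Equiv.Perm (Fin n))) :=
  Quot fun f f' : Fin n → Fin r => ∃ π ∈ G, f ∘ π = f'

lemma qrel_equiv {n r : ℕ} (G : Subgroup (Equiv.Perm (Fin n))) :
    Equivalence (fun f f' : Fin n → Fin r => ∃ π ∈ G, f ∘ π = f') := by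
  constructor
  · exact fun f => ⟨1, G.one_mem, by ext i; simp⟩
  · rintro f g ⟨π, hπ, rfl⟩
    exact ⟨π⁻¹, G.inv_mem hπ, by ext i; simp⟩
  · rintro f g h ⟨π, hπ, rfl⟩ ⟨σ, hσ, rfl⟩
    exact ⟨π * σ, G.mul_mem hπ hσ, by ext i; simp [Equiv.Perm.mul_apply]⟩

lemma quotG_mk_comp_inv {n r : ℕ} {G : Subgroup (Equiv.Perm (Fin n))}
    {π : Equiv.Perm (Fin n)} (hπ : π ∈ G) (f : Fin n → Fin r) :
    (Quot.mk _ (f ∘ ⇑π⁻¹) : QuotG n r G) = Quot.mk _ f :=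
  (Quot.sound ⟨π⁻¹, G.inv_mem hπ, rfl⟩).symm

section Aux

variable {R S : Type} [CommRing R] [CommRing S] [Algebra R S] {r n : ℕ}
  {G : Subgroup (Equiv.Perm (Fin n))}

variable (S) in
/-- Basis-type vectors in `Fin n → (Fin r → S)` indexed by `f : Fin n → Fin r`. -/
def eV (f : Fin n → Fin r) : Fin n → (Fin r → S) := fun i => Pi.single (f i) 1

variable (S G) in
/-- The multilinear "coordinate product" map at `f`. -/
def Pf (f : Fin n → Fin r) : MultilinearMap R (fun _ : Fin n => (Fin r → S)) S :=
  (MultilinearMap.mkPiAlgebra R (Fin n) S).compLinearMap fun i => LinearMap.proj (f i)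

lemma Pf_apply (f : Fin n → Fin r) (m : Fin n → (Fin r → S)) :
    Pf S (R := R) f m = ∏ i, m i (f i) := by
  simp [Pf]

variable (S G) in
/-- The multilinear map into functions on the orbit space. -/
noncomputable def Phi [DecidableEq (QuotG n r G)] :
    MultilinearMap R (fun _ : Fin n => (Fin r → S)) (QuotG n r G → S) :=
  MultilinearMap.pi fun q =>
    ∑ f ∈ Finset.univ.filter fun f : Fin n → Fin r => Quot.mk _ f = q, Pf S f

lemma Phi_apply [DecidableEq (QuotG n r G)] (m : Fin n → (Fin r → S)) (q : QuotG n r G) :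
    Phi S (R := R) G m q = ∑ f : Fin n → Fin r,
      if (Quot.mk _ f : QuotG n r G) = q then ∏ i, m i (f i) else 0 := by
  simp only [Phi, MultilinearMap.pi_apply, MultilinearMap.sum_apply, Finset.sum_filter]
  refine Finset.sum_congr rfl fun f _ => ?_
  split_ifs <;> simp [Pf_apply]

lemma Phi_comp [DecidableEq (QuotG n r G)] (m : Fin n → (Fin r → S))
    {π : Equiv.Perm (Fin n)} (hπ : π ∈ G) :
    Phi S (R := R) G (fun i => m (π i)) = Phi S (R := R) G m := by
  funext q
  rw [Phi_apply, Phi_apply]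
  apply Fintype.sum_equiv (Equiv.arrowCongr π (Equiv.refl (Fin r)))
  intro f
  have h1 : (Equiv.arrowCongr π (Equiv.refl (Fin r)) f) = f ∘ ⇑π⁻¹ := by
    funext i; simp [Equiv.arrowCongr, Equiv.Perm.inv_def]
  rw [h1, quotG_mk_comp_inv hπ]
  congr 1
  calc ∏ i, m (π i) (f i) = ∏ i, (fun j => m j (f (π⁻¹ j))) (π i) :=
        Finset.prod_congr rfl fun i _ => by simp
    _ = ∏ j, m j (f (π⁻¹ j)) := Equiv.prod_comp π (fun j => m j (f (π⁻¹ j)))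
    _ = ∏ j, m j ((f ∘ ⇑π⁻¹) j) := rfl

variable (S G) in
/-- Insert a scalar into the `i0` slot of the elementary tensor attached to `f`. -/
noncomputable def Tl (i0 : Fin n) (f : Fin n → Fin r) :
    S →ₗ[R] TensorPower R n (Fin r → S) :=
  ((tprod R (s := fun _ : Fin n => (Fin r → S))).toLinearMap (eV S f) i0).comp
    ((LinearMap.toSpanSingleton S (Fin r → S) (Pi.single (f i0) 1)).restrictScalars R)

lemma Tl_apply (i0 : Fin n) (f : Fin n → Fin r) (s : S) :
    Tl S (R := R) i0 f s = tprod R (Function.update (eV S f) i0 (s • eV S f i0)) := by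
  rfl

lemma tprod_update_smul (hs : Function.Surjective (algebraMap R S))
    (v : Fin n → (Fin r → S)) (i j : Fin n) (s : S) :
    tprod R (Function.update v i (s • v i)) = tprod R (Function.update v j (s • v j)) := by
  obtain ⟨c, rfl⟩ := hs s
  rw [algebraMap_smul, algebraMap_smul, MultilinearMap.map_update_smul,
    MultilinearMap.map_update_smul, Function.update_eq_self, Function.update_eq_self]

lemma tprod_smul_eV (hs : Function.Surjective (algebraMap R S)) (i0 : Fin n)
    (f : Fin n → Fin r) (s : Fin n → S) :
    tprod R (fun i => s i • eV S f i) = Tl S (R := R) i0 f (∏ i, s i) := by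
  choose c hc using fun i => hs (s i)
  have h1 : (fun i => s i • eV S f i) = fun i => c i • eV S f i := by
    funext i; rw [← hc, algebraMap_smul]
  have h2 : (∏ i, s i) = algebraMap R S (∏ i, c i) := by
    rw [map_prod]; exact Finset.prod_congr rfl fun i _ => (hc i).symm
  rw [h1, MultilinearMap.map_smul_univ, Tl_apply, h2, algebraMap_smul,
    MultilinearMap.map_update_smul, Function.update_eq_self]

lemma tprod_expand (hs : Function.Surjective (algebraMap R S)) (i0 : Fin n)
    (m : Fin n → (Fin r → S)) :
    tprod R m = ∑ f : Fin n → Fin r, Tl S (R := R) i0 f (∏ i, m i (f i)) := by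
  classical
  have hm : m = fun i => ∑ j : Fin r, (m i j) • (Pi.single j 1 : Fin r → S) := by
    funext i k
    simp [Pi.single_apply, mul_ite]
  calc tprod R m
      = tprod R (fun i => ∑ j : Fin r, (m i j) • (Pi.single j 1 : Fin r → S)) := by rw [← hm]
    _ = ∑ f : Fin n → Fin r, tprod R (fun i => (m i (f i)) • (Pi.single (f i) 1 : Fin r → S)) :=
        MultilinearMap.map_sum _ _
    _ = ∑ f : Fin n → Fin r, Tl S (R := R) i0 f (∏ i, m i (f i)) :=
        Finset.sum_congr rfl fun f _ => tprod_smul_eV hs i0 f _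

lemma mkQ_Tl_comp (hs : Function.Surjective (algebraMap R S)) (i0 : Fin n)
    (f : Fin n → Fin r) {π : Equiv.Perm (Fin n)} (hπ : π ∈ G) (s : S) :
    (GRel R (Fin r → S) n G).mkQ (Tl S (R := R) i0 (f ∘ ⇑π) s)
      = (GRel R (Fin r → S) n G).mkQ (Tl S (R := R) i0 f s) := by
  classical
  set m : Fin n → (Fin r → S) := Function.update (eV S f) i0 (s • eV S f i0) with hm
  have key : (fun i => m (π i))
      = Function.update (eV S (f ∘ ⇑π)) (π⁻¹ i0) (s • eV S (f ∘ ⇑π) (π⁻¹ i0)) := by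
    funext i
    by_cases h : π i = i0
    · have hi : i = π⁻¹ i0 := by simp [← h]
      subst hi
      rw [hm, Equiv.Perm.inv_def, Equiv.apply_symm_apply, Function.update_self, Function.update_self]
      simp [eV]
    · have hi : i ≠ π⁻¹ i0 := fun hc => h (by simp [hc])
      rw [hm]
      rw [Function.update_of_ne h, Function.update_of_ne hi]
      rfl
  have h1 : tprod R (fun i => m (π i)) = Tl S (R := R) i0 (f ∘ ⇑π) s := by
    rw [key, tprod_update_smul hs _ (π⁻¹ i0) i0, Tl_apply]
  have h2 : tprod R (fun i => m (π i)) - tprod R m ∈ GRel R (Fin r → S) n G :=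
    Submodule.subset_span ⟨m, π, hπ, rfl⟩
  rw [Tl_apply i0 f s, ← hm, ← h1]
  rw [Submodule.mkQ_apply, Submodule.mkQ_apply]
  exact (Submodule.Quotient.eq _).mpr h2

lemma mkQ_Tl_out (hs : Function.Surjective (algebraMap R S)) (i0 : Fin n)
    (f : Fin n → Fin r) (s : S) :
    (GRel R (Fin r → S) n G).mkQ (Tl S (R := R) i0 f s)
      = (GRel R (Fin r → S) n G).mkQ
          (Tl S (R := R) i0 (Quot.out (Quot.mk _ f : QuotG n r G)) s) := by
  have h := Quot.out_eq (Quot.mk (fun f f' : Fin n → Fin r => ∃ π ∈ G, f ∘ π = f') f)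
  rw [Quot.eq, (qrel_equiv G).eqvGen_iff] at h
  obtain ⟨π, hπ, hcomp⟩ := h
  conv_lhs => rw [← hcomp]
  exact mkQ_Tl_comp hs i0 _ hπ s

theorem gpow_equiv (hs : Function.Surjective (algebraMap R S)) (hn : 1 ≤ n) :
    Nonempty (GPow R (Fin r → S) n G ≃ₗ[R] (QuotG n r G → S)) := by
  classical
  haveI : Finite (QuotG n r G) := Finite.of_surjective (Quot.mk _) Quot.mk_surjective
  haveI : Fintype (QuotG n r G) := Fintype.ofFinite _
  set i0 : Fin n := ⟨0, hn⟩ with hi0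
  set L : TensorPower R n (Fin r → S) →ₗ[R] (QuotG n r G → S) :=
    PiTensorProduct.lift (Phi S (R := R) G) with hL
  have hLtprod : ∀ m : Fin n → (Fin r → S), L (tprod R m) = Phi S (R := R) G m := by
    intro m; rw [hL, PiTensorProduct.lift.tprod]
  have hker : GRel R (Fin r → S) n G ≤ LinearMap.ker L := by
    rw [Submodule.span_le]
    rintro x ⟨m, π, hπ, rfl⟩
    simp only [SetLike.mem_coe, LinearMap.mem_ker, map_sub, hLtprod,
      Phi_comp m hπ, sub_self]
  set Lbar : GPow R (Fin r → S) n G →ₗ[R] (QuotG n r G → S) :=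
    Submodule.liftQ _ L hker with hLbar
  have hLbar_mk : ∀ x, Lbar ((GRel R (Fin r → S) n G).mkQ x) = L x := by
    intro x; rw [hLbar, Submodule.mkQ_apply, Submodule.liftQ_apply]
  set B : (QuotG n r G → S) →ₗ[R] GPow R (Fin r → S) n G :=
    ∑ q : QuotG n r G,
      (((GRel R (Fin r → S) n G).mkQ.comp (Tl S (R := R) i0 q.out)).comp
        (LinearMap.proj q)) with hB
  have hBapply : ∀ g : QuotG n r G → S,
      B g = ∑ q : QuotG n r G, (GRel R (Fin r → S) n G).mkQ (Tl S (R := R) i0 q.out (g q)) := by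
    intro g
    rw [hB, LinearMap.sum_apply]
    rfl
  -- value of `L` on the images of `Tl`
  have hLT : ∀ (f : Fin n → Fin r) (s : S) (q' : QuotG n r G),
      L (Tl S (R := R) i0 f s) q' = if (Quot.mk _ f : QuotG n r G) = q' then s else 0 := by
    intro f s q'
    rw [Tl_apply, hLtprod, Phi_apply]
    have hprod : ∀ f' : Fin n → Fin r,
        (∏ i, (Function.update (eV S f) i0 (s • eV S f i0)) i (f' i))
          = if f' = f then s else 0 := by
      intro f'
      by_cases hf : f' = f
      · subst hf
        rw [if_pos rfl]
        rw [Finset.prod_eq_single i0 ?h1 ?h2]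
        · simp [eV, Pi.single_eq_same]
        case h1 =>
          intro b _ hb
          rw [Function.update_of_ne hb]
          simp [eV, Pi.single_eq_same]
        case h2 => intro h; exact absurd (Finset.mem_univ i0) h
      · rw [if_neg hf]
        obtain ⟨i, hi⟩ := Function.ne_iff.mp hf
        apply Finset.prod_eq_zero (Finset.mem_univ i)
        by_cases h : i = i0
        · subst h
          rw [Function.update_self]
          simp [eV, Pi.single_eq_of_ne hi]
        · rw [Function.update_of_ne h]
          simp [eV, Pi.single_eq_of_ne hi]
    have hsum : ∀ f' : Fin n → Fin r,
        (if (Quot.mk _ f' : QuotG n r G) = q'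
          then ∏ i, (Function.update (eV S f) i0 (s • eV S f i0)) i (f' i) else 0)
        = if f' = f then (if (Quot.mk _ f' : QuotG n r G) = q' then s else 0) else 0 := by
      intro f'
      rw [hprod f']
      by_cases h1 : (Quot.mk _ f' : QuotG n r G) = q' <;> by_cases h2 : f' = f <;>
        simp [h1, h2]
    rw [Finset.sum_congr rfl fun f' _ => hsum f']
    rw [Finset.sum_ite_eq' Finset.univ f
      (fun f' => if (Quot.mk _ f' : QuotG n r G) = q' then s else 0)]
    simp
  refine ⟨LinearEquiv.ofLinear Lbar B ?_ ?_⟩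
  · -- Lbar ∘ B = id
    refine LinearMap.ext fun g => funext fun q' => ?_
    show Lbar (B g) q' = g q'
    have : Lbar (B g) q' = g q' := by
      rw [hBapply, map_sum]
      rw [Finset.sum_apply]
      have hterm : ∀ q : QuotG n r G,
          Lbar ((GRel R (Fin r → S) n G).mkQ (Tl S (R := R) i0 q.out (g q))) q'
            = if q = q' then g q else 0 := by
        intro q
        rw [hLbar_mk, hLT]
        rw [Quot.out_eq q]
      rw [Finset.sum_congr rfl fun q _ => hterm q]
      rw [Finset.sum_ite_eq' Finset.univ q' g]
      simp
    exact this
  · -- B ∘ Lbar = id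
    apply Submodule.linearMap_qext
    rw [LinearMap.comp_assoc]
    have : Lbar.comp (GRel R (Fin r → S) n G).mkQ = L := Submodule.liftQ_mkQ _ _ _
    rw [this, LinearMap.id_comp]
    apply PiTensorProduct.ext
    apply MultilinearMap.ext
    intro m
    simp only [LinearMap.compMultilinearMap_apply, LinearMap.coe_comp, Function.comp_apply]
    rw [hLtprod]
    have hB2 : B (Phi S (R := R) G m)
        = ∑ q : QuotG n r G,
            (GRel R (Fin r → S) n G).mkQ (Tl S (R := R) i0 q.out (Phi S (R := R) G m q)) :=
      hBapply _
    rw [hB2]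
    have h3 : ∀ q : QuotG n r G,
        (GRel R (Fin r → S) n G).mkQ (Tl S (R := R) i0 q.out (Phi S (R := R) G m q))
          = ∑ f : Fin n → Fin r,
              if (Quot.mk _ f : QuotG n r G) = q
                then (GRel R (Fin r → S) n G).mkQ (Tl S (R := R) i0 q.out (∏ i, m i (f i)))
                else 0 := by
      intro q
      rw [Phi_apply, map_sum, map_sum]
      refine Finset.sum_congr rfl fun f _ => ?_
      by_cases h : (Quot.mk _ f : QuotG n r G) = q <;> simp [h]
    rw [Finset.sum_congr rfl fun q _ => h3 q, Finset.sum_comm]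
    have h4 : ∀ f : Fin n → Fin r,
        (∑ q : QuotG n r G,
            if (Quot.mk _ f : QuotG n r G) = q
              then (GRel R (Fin r → S) n G).mkQ (Tl S (R := R) i0 q.out (∏ i, m i (f i)))
              else 0)
          = (GRel R (Fin r → S) n G).mkQ (Tl S (R := R) i0 f (∏ i, m i (f i))) := by
      intro f
      rw [Finset.sum_ite_eq Finset.univ (Quot.mk _ f : QuotG n r G)
        (fun q => (GRel R (Fin r → S) n G).mkQ (Tl S (R := R) i0 q.out (∏ i, m i (f i))))]
      simp only [Finset.mem_univ, if_true]
      exact (mkQ_Tl_out hs i0 f _).symm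
    rw [Finset.sum_congr rfl fun f _ => h4 f, ← map_sum, ← tprod_expand hs i0 m]


end Aux

/-- Let `R` be a commutative unital ring, `r, n ≥ 1`, and `G ≤ S_n`.
Let `G` act on `[r]^{[n]} = {f : Fin n → Fin r}` by `(π.f)(i) = f(π.i)`, and let
`g_{r,n}` be the number of orbits (the cardinality of the quotient of `Fin n → Fin r` by
the relation `f ~ f ∘ π` for `π ∈ G`).  Then `T^n_G(R^r) ≅ R^{g_{r,n}}`, and more
generally `T^n_G((R/I)^r) ≅ (R/I)^{g_{r,n}}` for every ideal `I ⊴ R`. -/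
theorem gPower_free_module (R : Type) [CommRing R] (r n : ℕ) (hr : 1 ≤ r) (hn : 1 ≤ n)
    (G : Subgroup (Equiv.Perm (Fin n))) :
    Nonempty (GPow R (Fin r → R) n G ≃ₗ[R]
        (Fin (Nat.card (Quot fun f f' : Fin n → Fin r => ∃ π ∈ G, f ∘ π = f')) → R)) ∧
    ∀ I : Ideal R,
      Nonempty (GPow R (Fin r → R ⧸ I) n G ≃ₗ[R]
        (Fin (Nat.card (Quot fun f f' : Fin n → Fin r => ∃ π ∈ G, f ∘ π = f')) →
          R ⧸ I)) := by
  classical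
  have key : ∀ (S : Type) (_ : CommRing S) (_ : Algebra R S),
      Function.Surjective (algebraMap R S) →
      Nonempty (GPow R (Fin r → S) n G ≃ₗ[R] (Fin (Nat.card (QuotG n r G)) → S)) := by
    intro S _ _ hs
    obtain ⟨e⟩ := gpow_equiv (G := G) hs hn
    haveI : Finite (QuotG n r G) := Finite.of_surjective (Quot.mk _) Quot.mk_surjective
    exact ⟨e.trans (LinearEquiv.funCongrLeft R S (Finite.equivFin (QuotG n r G)).symm)⟩
  constructor
  · exact key R _ _ (fun x => ⟨x, rfl⟩)
  · intro I
    exact key (R ⧸ I) _ _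
      (by rw [Ideal.Quotient.algebraMap_eq]; exact Ideal.Quotient.mk_surjective)
end

section
/- Let R be a commutative unital ring, s ≥ 1 and n ≥ 1 natural numbers, a_1, ..., a_s ∈ R (zero values allowed), and G ≤ S_n a subgroup of the symmetric group on n letters. Let G act on the set of functions [s]^{[n]} = {f : {1,...,n} → {1,...,s}} by (π.f)(i) = f(π.i). Then for M = ⊕_{i=1}^s R/Ra_i there is an R-module isomorphism T^n_G(M) ≅ ⊕_{F ∈ [s]^{[n]}/G} R / ⟨a_{f(i)} : i ∈ [n], f ∈ F⟩, where F runs through all orbits of the action of G on [s]^{[n]} and ⟨a_{f(i)} : i ∈ [n], f ∈ F⟩ is the ideal generated by all elements a_{f(i)} with f in the orbit F and i ∈ {1,...,n}. -/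
open TensorProduct PiTensorProduct

namespace Stmt18

variable {R : Type} [CommRing R] {s n : ℕ}

/-- The orbit relation of `G` acting on `Fin n → Fin s`. -/
abbrev rel (G : Subgroup (Equiv.Perm (Fin n))) (f f' : Fin n → Fin s) : Prop :=
  ∃ π ∈ G, f ∘ π = f'

variable (a : Fin s → R) (G : Subgroup (Equiv.Perm (Fin n)))

lemma rel_equivalence : Equivalence (rel (s := s) G) := by
  constructor
  · intro f; exact ⟨1, G.one_mem, by ext i; simp⟩
  · rintro f g ⟨π, hπ, rfl⟩
    exact ⟨π⁻¹, G.inv_mem hπ, by ext i; simp⟩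
  · rintro f g h ⟨π, hπ, rfl⟩ ⟨σ, hσ, rfl⟩
    exact ⟨π * σ, G.mul_mem hπ hσ, by ext i; simp⟩

/-- The quotient of `Fin n → Fin s` by the orbit relation. -/
abbrev QT (s : ℕ) (G : Subgroup (Equiv.Perm (Fin n))) : Type :=
  Quot (rel (s := s) G)

noncomputable instance : Fintype (QT s G) := Fintype.ofFinite _
noncomputable instance : DecidableEq (QT s G) := Classical.decEq _

lemma mk_eq_iff {f g : Fin n → Fin s} :
    Quot.mk (rel G) f = Quot.mk (rel G) g ↔ rel G f g :=
  Quot.eq.trans (rel_equivalence G).eqvGen_iff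

/-- The module `M = ⊕ R/Ra_i`. -/
abbrev MM : Type := ∀ i : Fin s, R ⧸ Ideal.span {a i}

/-- The ideal attached to an orbit. -/
abbrev I (F : QT s G) : Ideal R :=
  Ideal.span {x : R | ∃ f : Fin n → Fin s,
    Quot.mk (rel G) f = F ∧ ∃ i : Fin n, x = a (f i)}

/-- The target module. -/
abbrev Tgt : Type := ∀ F : QT s G, R ⧸ I a G F

lemma mem_I {f : Fin n → Fin s} {F : QT s G} (h : Quot.mk (rel G) f = F) (i : Fin n) :
    a (f i) ∈ I a G F := Ideal.subset_span ⟨f, h, i, rfl⟩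

/-- Factor map `R/Ra_{f i} → R/I_{[f]}`. -/
noncomputable def fac (f : Fin n → Fin s) (i : Fin n) :
    (R ⧸ Ideal.span {a (f i)}) →ₗ[R] R ⧸ I a G (Quot.mk (rel G) f) :=
  Submodule.mapQ _ _ LinearMap.id (by
    rw [Submodule.comap_id]
    exact (Ideal.span_singleton_le_iff_mem _).mpr (mem_I a G rfl i))

lemma fac_mk (f : Fin n → Fin s) (i : Fin n) (x : R) :
    fac a G f i (Ideal.Quotient.mk _ x) = Ideal.Quotient.mk _ x := by
  rw [← Ideal.Quotient.mk_eq_mk (I := Ideal.span {a (f i)}) x,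
    ← Ideal.Quotient.mk_eq_mk (I := I a G (Quot.mk (rel G) f)) x, fac,
    Submodule.mapQ_apply]
  rfl

lemma single_mk_congr {F F' : QT s G} (h : F = F') {x y : R} (hxy : x = y) :
    (Pi.single F (Ideal.Quotient.mk (I a G F) x) : Tgt a G)
      = Pi.single F' (Ideal.Quotient.mk (I a G F') y) := by
  subst h; subst hxy; rfl

/-- The multilinear map underlying the forward map. -/
noncomputable def phiML : MultilinearMap R (fun _ : Fin n => MM a) (Tgt a G) :=
  ∑ f : Fin n → Fin s,
    (LinearMap.single R (fun F => R ⧸ I a G F) (Quot.mk (rel G) f)).compMultilinearMap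
      ((MultilinearMap.mkPiAlgebra R (Fin n) (R ⧸ I a G (Quot.mk (rel G) f))).compLinearMap
        fun i => fac a G f i ∘ₗ LinearMap.proj (f i))

lemma phiML_apply (m : Fin n → MM a) :
    phiML a G m = ∑ f : Fin n → Fin s,
      Pi.single (Quot.mk (rel G) f) (∏ i, fac a G f i (m i (f i))) := by
  simp [phiML, MultilinearMap.sum_apply]

lemma phiML_pure (f : Fin n → Fin s) (r : Fin n → R) :
    phiML a G (fun i => Pi.single (f i) (Ideal.Quotient.mk _ (r i))) =
      Pi.single (Quot.mk (rel G) f) (Ideal.Quotient.mk _ (∏ i, r i)) := by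
  rw [phiML_apply, Finset.sum_eq_single f]
  · refine congrArg _ ?_
    refine Eq.trans (Finset.prod_congr rfl fun i _ => ?_) (map_prod _ _ _).symm
    rw [Pi.single_eq_same, fac_mk]
  · intro g _ hgf
    obtain ⟨i, hi⟩ := Function.ne_iff.mp (Ne.symm hgf)
    rw [Finset.prod_eq_zero (Finset.mem_univ i) (by rw [Pi.single_eq_of_ne (Ne.symm hi), map_zero]),
      Pi.single_zero]
  · simp

lemma exists_repr (m : Fin n → MM a) :
    ∃ r : Fin n → Fin s → R, ∀ i, m i = ∑ j : Fin s,
      Pi.single j (Ideal.Quotient.mk (Ideal.span {a j}) (r i j)) := by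
  choose r hr using fun i j => Ideal.Quotient.mk_surjective (m i j)
  refine ⟨r, fun i => ?_⟩
  conv_lhs => rw [← Finset.univ_sum_single (m i)]
  exact Finset.sum_congr rfl fun j _ => by rw [hr]

lemma phiML_expand (m : Fin n → MM a) (r : Fin n → Fin s → R)
    (hm : ∀ i, m i = ∑ j : Fin s, Pi.single j (Ideal.Quotient.mk (Ideal.span {a j}) (r i j))) :
    phiML a G m = ∑ f : Fin n → Fin s,
      Pi.single (Quot.mk (rel G) f) (Ideal.Quotient.mk _ (∏ i, r i (f i))) := by
  have h1 : m = fun i => ∑ j : Fin s, Pi.single j (Ideal.Quotient.mk _ (r i j)) :=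
    funext hm
  rw [h1, MultilinearMap.map_sum]
  exact Finset.sum_congr rfl fun f _ => phiML_pure a G f _

lemma phiML_perm (m : Fin n → MM a) {π : Equiv.Perm (Fin n)} (hπ : π ∈ G) :
    phiML a G (fun i => m (π i)) = phiML a G m := by
  obtain ⟨r, hr⟩ := exists_repr a m
  rw [phiML_expand a G m r hr,
    phiML_expand a G (fun i => m (π i)) (fun i j => r (π i) j) (fun i => hr (π i))]
  rw [← Equiv.sum_comp (Equiv.arrowCongr (π : Equiv (Fin n) (Fin n)) (Equiv.refl (Fin s)))
    (fun f => Pi.single (M := fun F => R ⧸ I a G F) (Quot.mk (rel G) f)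
      (Ideal.Quotient.mk _ (∏ i, r i (f i))))]
  refine Finset.sum_congr rfl fun f _ => ?_
  have harr : (Equiv.arrowCongr (π : Equiv (Fin n) (Fin n)) (Equiv.refl (Fin s))) f
      = f ∘ ⇑π⁻¹ := rfl
  rw [harr]
  refine single_mk_congr a G ?_ ?_
  · exact (mk_eq_iff G).mpr ⟨π⁻¹, G.inv_mem hπ, rfl⟩
  · rw [← Equiv.prod_comp π (fun k => r k ((f ∘ ⇑π⁻¹) k))]
    exact Finset.prod_congr rfl fun i _ => by simp

/-- Forward map on the quotient. -/
noncomputable def phiQ : GPow R (MM a) n G →ₗ[R] Tgt a G :=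
  Submodule.liftQ _ (PiTensorProduct.lift (phiML a G)) (by
    rw [Submodule.span_le]
    rintro x ⟨m, π, hπ, rfl⟩
    simp only [SetLike.mem_coe, LinearMap.mem_ker, map_sub, sub_eq_zero, lift.tprod]
    exact phiML_perm a G m hπ)

lemma smul_mk_one (J : Ideal R) (x : R) :
    x • (Ideal.Quotient.mk J 1) = Ideal.Quotient.mk J x := by
  rw [← Ideal.Quotient.mk_eq_mk (I := J) 1, ← Ideal.Quotient.mk_eq_mk (I := J) x,
    ← Submodule.Quotient.mk_smul, smul_eq_mul, mul_one]

/-- The generators `e_j` of `M`. -/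
noncomputable def ee (j : Fin s) : MM a :=
  Pi.single j (Ideal.Quotient.mk (Ideal.span {a j}) 1)

lemma smul_ee (j : Fin s) (c : R) :
    c • ee a j = Pi.single j (Ideal.Quotient.mk (Ideal.span {a j}) c) := by
  rw [ee, ← Pi.single_smul, smul_mk_one]

lemma a_smul_tprod_ee (f : Fin n → Fin s) (i : Fin n) :
    a (f i) • (tprod R fun k => ee a (f k) : TensorPower R n (MM a)) = 0 := by
  have h0 : a (f i) • ee a (f i) = 0 := by
    rw [smul_ee]
    have hz : Ideal.Quotient.mk (Ideal.span {a (f i)}) (a (f i)) = 0 :=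
      Ideal.Quotient.eq_zero_iff_mem.mpr (Ideal.mem_span_singleton_self _)
    rw [hz, Pi.single_zero]
  have h1 : (fun k => ee a (f k)) = Function.update (fun k => ee a (f k)) i (ee a (f i)) := by
    rw [Function.update_eq_self]
  rw [h1, ← MultilinearMap.map_update_smul, h0, MultilinearMap.map_update_zero]

lemma mk_tprod_comp {f g : Fin n → Fin s} (h : Quot.mk (rel G) f = Quot.mk (rel G) g) :
    (Submodule.Quotient.mk (tprod R fun i => ee a (f i)) : GPow R (MM a) n G) =
      Submodule.Quotient.mk (tprod R fun i => ee a (g i)) := by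
  obtain ⟨π, hπ, hfg⟩ := (mk_eq_iff G).mp h
  subst hfg
  rw [eq_comm, Submodule.Quotient.eq]
  exact Submodule.subset_span ⟨fun i => ee a (f i), π, hπ, rfl⟩

/-- The distinguished generator of the orbit component. -/
noncomputable def xF (F : QT s G) : GPow R (MM a) n G :=
  Submodule.Quotient.mk (tprod R fun i => ee a (Quot.out F i))

lemma xF_eq {f : Fin n → Fin s} {F : QT s G} (h : Quot.mk (rel G) f = F) :
    xF a G F = Submodule.Quotient.mk (tprod R fun i => ee a (f i)) := by
  subst h
  exact mk_tprod_comp a G (Quot.out_eq _)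

lemma smul_xF {f : Fin n → Fin s} {F : QT s G} (h : Quot.mk (rel G) f = F) (i : Fin n) :
    a (f i) • xF a G F = 0 := by
  rw [xF_eq a G h, ← Submodule.Quotient.mk_smul, a_smul_tprod_ee a f i,
    Submodule.Quotient.mk_zero]

/-- The components of the inverse map. -/
noncomputable def psiF (F : QT s G) : (R ⧸ I a G F) →ₗ[R] GPow R (MM a) n G :=
  Submodule.liftQ _ (LinearMap.toSpanSingleton R _ (xF a G F)) (by
    rw [Ideal.span_le]
    rintro x ⟨f, hf, i, rfl⟩
    simp only [SetLike.mem_coe, LinearMap.mem_ker, LinearMap.toSpanSingleton_apply]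
    exact smul_xF a G hf i)

lemma psiF_mk (F : QT s G) (x : R) :
    psiF a G F (Ideal.Quotient.mk _ x) = x • xF a G F := by
  rw [← Ideal.Quotient.mk_eq_mk (I := I a G F) x, psiF, Submodule.liftQ_apply,
    LinearMap.toSpanSingleton_apply]

/-- The inverse map. -/
noncomputable def psi : Tgt a G →ₗ[R] GPow R (MM a) n G :=
  ∑ F : QT s G, psiF a G F ∘ₗ LinearMap.proj F

lemma psi_single (F : QT s G) (y : R ⧸ I a G F) :
    psi a G (Pi.single F y) = psiF a G F y := by
  rw [psi, LinearMap.sum_apply, Finset.sum_eq_single F]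
  · rw [LinearMap.comp_apply, LinearMap.proj_apply, Pi.single_eq_same]
  · intro F' _ hF'
    rw [LinearMap.comp_apply, LinearMap.proj_apply, Pi.single_eq_of_ne hF', map_zero]
  · simp

lemma phiML_ee (F : QT s G) :
    phiML a G (fun i => ee a (Quot.out F i)) = Pi.single F (Ideal.Quotient.mk _ 1) := by
  have h := phiML_pure a G (Quot.out F) (fun _ => 1)
  rw [Finset.prod_const_one] at h
  calc phiML a G (fun i => ee a (Quot.out F i))
      = Pi.single (Quot.mk (rel G) (Quot.out F))
          (Ideal.Quotient.mk (I a G (Quot.mk (rel G) (Quot.out F))) 1) := h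
    _ = Pi.single F (Ideal.Quotient.mk _ 1) := single_mk_congr a G (Quot.out_eq F) rfl

lemma comp1 : phiQ a G ∘ₗ psi a G = LinearMap.id := by
  refine LinearMap.pi_ext' fun F => ?_
  refine Submodule.linearMap_qext _ ?_
  refine LinearMap.ext fun x => ?_
  simp only [LinearMap.comp_apply, Submodule.mkQ_apply, LinearMap.id_apply]
  rw [Ideal.Quotient.mk_eq_mk (I := I a G F) x]
  have hsing : (LinearMap.single R (fun F => R ⧸ I a G F) F) (Ideal.Quotient.mk (I a G F) x)
      = Pi.single F (Ideal.Quotient.mk (I a G F) x) := rfl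
  rw [hsing, psi_single, psiF_mk, map_smul, xF, phiQ, Submodule.liftQ_apply, lift.tprod,
    phiML_ee, ← Pi.single_smul, smul_mk_one]

lemma comp2 : psi a G ∘ₗ phiQ a G = LinearMap.id := by
  refine Submodule.linearMap_qext _ ?_
  refine PiTensorProduct.ext ?_
  refine MultilinearMap.ext fun m => ?_
  simp only [LinearMap.compMultilinearMap_apply, LinearMap.comp_apply, Submodule.mkQ_apply,
    LinearMap.id_apply]
  obtain ⟨r, hr⟩ := exists_repr a m
  have hexp : (tprod R (s := fun _ : Fin n => MM a)) m = ∑ f : Fin n → Fin s,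
      PiTensorProduct.tprod R (fun i => Pi.single (f i)
        (Ideal.Quotient.mk (Ideal.span {a (f i)}) (r i (f i)))) := by
    conv_lhs => rw [funext hr]
    exact MultilinearMap.map_sum _ _
  rw [hexp, ← Submodule.mkQ_apply, map_sum, map_sum, map_sum]
  refine Finset.sum_congr rfl fun f _ => ?_
  rw [Submodule.mkQ_apply, phiQ, Submodule.liftQ_apply, lift.tprod, phiML_pure, psi_single,
    psiF_mk, xF_eq a G rfl, ← Submodule.Quotient.mk_smul]
  congr 1
  rw [← MultilinearMap.map_smul_univ]
  exact congrArg _ (funext fun i => by rw [smul_ee])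

end Stmt18

/-- Let `R` be a commutative unital ring, `s, n ≥ 1`, `a_1, …, a_s ∈ R`
(zero values allowed) and `G ≤ S_n`.  Let `G` act on `[s]^{[n]} = {f : Fin n → Fin s}`
by `(π.f)(i) = f(π.i)`.  Then for `M = ⊕_{i=1}^s R/Ra_i` we have
`T^n_G(M) ≅ ⊕_{F ∈ [s]^{[n]}/G} R/⟨a_{f(i)} : i ∈ [n], f ∈ F⟩`, where `F` runs through
the orbits of the action of `G` on `[s]^{[n]}`. -/
theorem gPower_torsion_module (R : Type) [CommRing R] (s n : ℕ) (hs : 1 ≤ s) (hn : 1 ≤ n)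
    (a : Fin s → R) (G : Subgroup (Equiv.Perm (Fin n))) :
    Nonempty (GPow R (Π i : Fin s, R ⧸ Ideal.span {a i}) n G ≃ₗ[R]
      Π F : Quot (fun f f' : Fin n → Fin s => ∃ π ∈ G, f ∘ π = f'),
        R ⧸ Ideal.span {x : R | ∃ f : Fin n → Fin s,
          Quot.mk (fun f f' : Fin n → Fin s => ∃ π ∈ G, f ∘ π = f') f = F ∧
          ∃ i : Fin n, x = a (f i)}) := by
  exact ⟨LinearEquiv.ofLinear (Stmt18.phiQ a G) (Stmt18.psi a G)
    (Stmt18.comp1 a G) (Stmt18.comp2 a G)⟩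
end
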